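/- arXiv:2409.16310 — 2 statements merged into one kernel-verified Lean document; each statement's English description precedes it below -/
import Mathlib

section
/- Let C be a linear code over the finite field F_q that contains a nonzero codeword. Let wt_min be the minimum Hamming weight of a nonzero codeword of C and wt_max the maximum Hamming weight of a codeword of C. If q·wt_min > (q-1)·wt_max, then C is a minimal code. -/
/-- **Ashikhmin–Barg condition.**
Let `C` be a linear code over the finite field `F` with `q` elements that contains a
nonzero codeword.  Let `wtmin` be the minimum Hamming weight of a nonzero codeword of
`C` and `wtmax` the maximum Hamming weight of a codeword of `C`.  If
`q * wtmin > (q - 1) * wtmax`, then `C` is a minimal code: every nonzero codeword `c`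
of `C` covers (support-wise) only scalar multiples of itself. -/
theorem ashikhmin_barg_minimal
    {F : Type} [Field F] [Fintype F] [DecidableEq F] (q : ℕ) (hq : Fintype.card F = q)
    {n : ℕ} (C : Submodule F (Fin n → F))
    (wtmin wtmax : ℕ)
    (hmin_le : ∀ c ∈ C, c ≠ 0 → wtmin ≤ hammingNorm c)
    (hmin_mem : ∃ c ∈ C, c ≠ 0 ∧ hammingNorm c = wtmin)
    (hmax_le : ∀ c ∈ C, hammingNorm c ≤ wtmax)
    (hmax_mem : ∃ c ∈ C, hammingNorm c = wtmax)
    (hAB : q * wtmin > (q - 1) * wtmax) :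
    ∀ c ∈ C, c ≠ 0 → ∀ c' ∈ C,
      (∀ i, c' i ≠ 0 → c i ≠ 0) → ∃ a : F, c' = a • c := by
  intro c hc hc0 c' hc' hsupp
  by_contra h
  push_neg at h
  subst hq
  have hne : ∀ a : F, c' - a • c ≠ 0 := by
    intro a hzero
    exact h a (by rwa [sub_eq_zero] at hzero)
  have hmem : ∀ a : F, c' - a • c ∈ C := fun a => C.sub_mem hc' (C.smul_mem a hc)
  have hlb : ∀ a : F, wtmin ≤ hammingNorm (c' - a • c) :=
    fun a => hmin_le _ (hmem a) (hne a)
  have key : ∑ a : F, hammingNorm (c' - a • c)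
      = (Fintype.card F - 1) * hammingNorm c := by
    have step1 : ∀ a : F, hammingNorm (c' - a • c)
        = ∑ i : Fin n, if c' i - a * c i ≠ 0 then 1 else 0 := by
      intro a
      rw [hammingNorm, Finset.card_filter]
      rfl
    simp only [step1]
    rw [Finset.sum_comm]
    have step2 : ∀ i : Fin n, (∑ a : F, if c' i - a * c i ≠ 0 then 1 else 0)
        = if c i ≠ 0 then Fintype.card F - 1 else 0 := by
      intro i
      by_cases hci : c i = 0
      · have : c' i = 0 := by
          by_contra hci'
          exact hsupp i hci' hci
        simp [hci, this]
      · simp only [hci, ne_eq, not_false_eq_true, if_true]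
        have heq : ∀ a : F, (c' i - a * c i ≠ 0) ↔ a ≠ c' i * (c i)⁻¹ := by
          intro a
          rw [sub_ne_zero]
          constructor
          · intro hne' he; subst he
            apply hne'
            field_simp
          · intro hne' he
            apply hne'
            rw [he]
            field_simp
        calc (∑ a : F, if c' i - a * c i ≠ 0 then 1 else 0)
            = ∑ a : F, if a ≠ c' i * (c i)⁻¹ then 1 else 0 := by
              refine Finset.sum_congr rfl fun a _ => ?_
              simp [heq a]
          _ = (Finset.univ.filter (· ≠ c' i * (c i)⁻¹)).card := by
              rw [Finset.card_filter]
          _ = Fintype.card F - 1 := by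
              rw [Finset.filter_ne' Finset.univ, Finset.card_erase_of_mem (Finset.mem_univ _),
                Finset.card_univ]
    simp only [step2]
    rw [hammingNorm, Finset.card_filter, Finset.mul_sum]
    refine Finset.sum_congr rfl fun i _ => ?_
    by_cases hci : c i = 0 <;> simp [hci]
  have h1 : Fintype.card F * wtmin ≤ ∑ a : F, hammingNorm (c' - a • c) := by
    calc Fintype.card F * wtmin = ∑ _a : F, wtmin := by
          rw [Finset.sum_const, smul_eq_mul, Finset.card_univ]
      _ ≤ _ := Finset.sum_le_sum fun a _ => hlb a
  have h2 : (Fintype.card F - 1) * hammingNorm c ≤ (Fintype.card F - 1) * wtmax :=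
    Nat.mul_le_mul_left _ (hmax_le c hc)
  omega
end

section
/- Let T and n be positive integers with T ≤ 2^{n-1}. Then Σ_{i=0}^{n-1} ⌈(2^{n-1}+1-T)/2^i⌉ = 2^n + l(T) - 2T + v_2(T), and Σ_{i=0}^{n-1} ⌈(2^{n-1}-T)/2^i⌉ = 2^n + l(T) - 2T - 1, where l(T) is the number of ones in the binary expansion of T and v_2(T) is the 2-adic valuation of T. -/
/-- For a positive integer `T`, `l T` is the number of ones in the binary expansion
of `T` (its binary digit sum). -/
def binaryDigitSum (T : ℕ) : ℕ := (Nat.digits 2 T).sum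

private lemma dsum_step (K : ℕ) : binaryDigitSum K = K % 2 + binaryDigitSum (K / 2) := by
  rcases Nat.eq_zero_or_pos K with h | h
  · simp [h, binaryDigitSum]
  · unfold binaryDigitSum
    rw [Nat.digits_def' (by norm_num : 1 < 2) h, List.sum_cons]

private lemma dsum_le (K : ℕ) : binaryDigitSum K ≤ K := by
  induction K using Nat.strong_induction_on with
  | _ K ih =>
    rcases Nat.eq_zero_or_pos K with h | h
    · simp [h, binaryDigitSum]
    · have := ih (K / 2) (Nat.div_lt_self h one_lt_two)
      rw [dsum_step]; omega

private lemma dsum_lt_pow (m : ℕ) : ∀ K, K < 2 ^ m → binaryDigitSum K ≤ m := by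
  induction m with
  | zero => intro K hK; interval_cases K; simp [binaryDigitSum]
  | succ m ih =>
    intro K hK
    have h2 : K / 2 < 2 ^ m := by
      have : (2:ℕ) ^ (m+1) = 2 * 2 ^ m := by ring
      omega
    have := ih (K / 2) h2
    rw [dsum_step]; omega

private lemma sum_div_pow (n : ℕ) : ∀ K, K < 2 ^ n →
    ∑ i ∈ Finset.range n, K / 2 ^ i = 2 * K - binaryDigitSum K := by
  induction n with
  | zero => intro K hK; interval_cases K; simp [binaryDigitSum]
  | succ n ih =>
    intro K hK
    rw [Finset.sum_range_succ']
    have hrw : ∀ i ∈ Finset.range n, K / 2 ^ (i + 1) = (K / 2) / 2 ^ i := by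
      intro i _
      rw [Nat.div_div_eq_div_mul]
      ring_nf
    rw [Finset.sum_congr rfl hrw]
    have h2 : K / 2 < 2 ^ n := by
      have : (2:ℕ) ^ (n+1) = 2 * 2 ^ n := by ring
      omega
    rw [ih (K / 2) h2]
    have h3 := dsum_le (K / 2)
    have h4 := dsum_step K
    simp only [pow_zero, Nat.div_one]
    omega

private lemma dsum_compl (m : ℕ) : ∀ T, T < 2 ^ m →
    binaryDigitSum (2 ^ m - 1 - T) = m - binaryDigitSum T := by
  induction m with
  | zero => intro T hT; interval_cases T; simp [binaryDigitSum]
  | succ m ih =>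
    intro T hT
    set C := 2 ^ (m + 1) - 1 - T with hC
    have hpow : (2:ℕ) ^ (m+1) = 2 * 2 ^ m := by ring
    have hC2 : C / 2 = 2 ^ m - 1 - T / 2 ∧ C % 2 = 1 - T % 2 := by
      constructor <;> omega
    have hT2 : T / 2 < 2 ^ m := by omega
    have h1 := ih (T / 2) hT2
    have h2 := dsum_lt_pow m (T / 2) hT2
    rw [dsum_step C, hC2.1, hC2.2, h1, dsum_step T]
    omega

private lemma dsum_pred (T : ℕ) (hT : 0 < T) :
    binaryDigitSum (T - 1) + 1 = binaryDigitSum T + padicValNat 2 T := by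
  induction T using Nat.strong_induction_on with
  | _ T ih =>
    rcases Nat.even_or_odd T with he | ho
    · obtain ⟨k, hk⟩ := he
      have hkpos : 0 < k := by omega
      have hv : padicValNat 2 T = 1 + padicValNat 2 k := by
        rw [show T = 2 * k by omega,
          padicValNat.mul (by norm_num) (by omega), padicValNat.self one_lt_two]
      have ihk := ih k (by omega) hkpos
      have e1 : (T - 1) % 2 = 1 := by omega
      have e2 : (T - 1) / 2 = k - 1 := by omega
      have e3 : T % 2 = 0 := by omega
      have e4 : T / 2 = k := by omega
      have h1 : binaryDigitSum T = binaryDigitSum k := by rw [dsum_step T, e3, e4]; omega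
      have h2 : binaryDigitSum (T - 1) = 1 + binaryDigitSum (k - 1) := by
        rw [dsum_step (T-1), e1, e2]
      omega
    · have e3 : T % 2 = 1 := Nat.odd_iff.mp ho
      have hv : padicValNat 2 T = 0 := by
        apply padicValNat.eq_zero_of_not_dvd
        rw [Nat.two_dvd_ne_zero]
        omega
      have e1 : (T - 1) % 2 = 0 := by omega
      have e2 : (T - 1) / 2 = T / 2 := by omega
      have h1 : binaryDigitSum T = 1 + binaryDigitSum (T / 2) := by rw [dsum_step T, e3]
      have h2 : binaryDigitSum (T - 1) = binaryDigitSum (T / 2) := by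
        rw [dsum_step (T-1), e1, e2]; omega
      omega

private lemma dsum_two_pow (k : ℕ) : binaryDigitSum (2 ^ k) = 1 := by
  induction k with
  | zero => simp [binaryDigitSum]
  | succ k ih =>
    have e1 : 2 ^ (k+1) % 2 = 0 := by omega
    have e2 : 2 ^ (k+1) / 2 = 2 ^ k := by
      have : (2:ℕ)^(k+1) = 2 * 2^k := by ring
      omega
    rw [dsum_step, e1, e2, ih]

private lemma ceil_term (K i : ℕ) (hK : 0 < K) :
    ⌈(K : ℚ) / (2:ℚ) ^ i⌉ = (((K - 1) / 2 ^ i + 1 : ℕ) : ℤ) := by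
  have hp : (0:ℚ) < 2 ^ i := by positivity
  have hpn : (0:ℕ) < 2 ^ i := by positivity
  have hn1 : (K - 1) / 2 ^ i * 2 ^ i < K := by
    have := Nat.div_mul_le_self (K - 1) (2 ^ i)
    omega
  have hn2 : K ≤ (K - 1) / 2 ^ i * 2 ^ i + 2 ^ i := by
    have := Nat.lt_div_mul_add (a := K - 1) hpn
    omega
  rw [Int.ceil_eq_iff]
  constructor
  · rw [lt_div_iff₀ hp]
    have h' : (((K - 1) / 2 ^ i : ℕ) : ℚ) * 2 ^ i < K := by exact_mod_cast hn1
    simp only [Int.cast_add, Int.cast_one, Int.cast_natCast, Nat.cast_add, Nat.cast_one]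
    nlinarith
  · rw [div_le_iff₀ hp]
    have h' : (K : ℚ) ≤ (((K - 1) / 2 ^ i : ℕ) : ℚ) * 2 ^ i + 2 ^ i := by exact_mod_cast hn2
    simp only [Int.cast_add, Int.cast_one, Int.cast_natCast, Nat.cast_add, Nat.cast_one]
    nlinarith

/-- Let `T` and `n` be positive integers with `T ≤ 2^(n-1)`.  Then
`Σ_{i=0}^{n-1} ⌈(2^(n-1)+1-T)/2^i⌉ = 2^n + l(T) - 2T + v₂(T)` and
`Σ_{i=0}^{n-1} ⌈(2^(n-1)-T)/2^i⌉ = 2^n + l(T) - 2T - 1`,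
where `l(T)` is the binary digit sum of `T` and `v₂(T)` is the 2-adic valuation. -/
theorem ceil_sums_binary (T n : ℕ) (hT : 0 < T) (hn : 0 < n) (hTle : T ≤ 2 ^ (n - 1)) :
    (∑ i ∈ Finset.range n, ⌈((2 : ℚ) ^ (n - 1) + 1 - (T : ℚ)) / (2 : ℚ) ^ i⌉
        = (2 : ℤ) ^ n + (binaryDigitSum T : ℤ) - 2 * (T : ℤ) + (padicValNat 2 T : ℤ)) ∧
    (∑ i ∈ Finset.range n, ⌈((2 : ℚ) ^ (n - 1) - (T : ℚ)) / (2 : ℚ) ^ i⌉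
        = (2 : ℤ) ^ n + (binaryDigitSum T : ℤ) - 2 * (T : ℤ) - 1) := by
  have hpow : (2:ℕ) ^ n = 2 * 2 ^ (n - 1) := by
    rw [← pow_succ']
    congr 1
    omega
  have hcZ : ((2 ^ n : ℕ) : ℤ) = (2:ℤ) ^ n := by push_cast; ring
  have hdT : binaryDigitSum (T - 1) + 1 = binaryDigitSum T + padicValNat 2 T := dsum_pred T hT
  have hdTle : binaryDigitSum (T - 1) ≤ n - 1 := dsum_lt_pow (n-1) (T-1) (by omega)
  constructor
  · set K := 2 ^ (n - 1) + 1 - T with hK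
    have hKpos : 0 < K := by omega
    have hcast : (2:ℚ) ^ (n - 1) + 1 - (T:ℚ) = (K:ℚ) := by
      have h := Nat.cast_sub (R := ℚ) (show T ≤ 2 ^ (n-1) + 1 by omega)
      rw [hK, h]
      push_cast
      ring
    simp only [hcast]
    rw [Finset.sum_congr rfl (fun i _ => ceil_term K i hKpos), ← Nat.cast_sum]
    rw [show (∑ i ∈ Finset.range n, ((K - 1) / 2 ^ i + 1))
        = (∑ i ∈ Finset.range n, (K - 1) / 2 ^ i) + n by
      rw [Finset.sum_add_distrib, Finset.sum_const, Finset.card_range, smul_eq_mul, mul_one]]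
    rw [sum_div_pow n (K - 1) (by omega)]
    have hcompl : binaryDigitSum (K - 1) = (n - 1) - binaryDigitSum (T - 1) := by
      rw [show K - 1 = 2 ^ (n - 1) - 1 - (T - 1) by omega]
      exact dsum_compl (n-1) (T-1) (by omega)
    have hle2 : binaryDigitSum (K - 1) ≤ K - 1 := dsum_le _
    rw [← hcZ]
    omega
  · by_cases hTeq : T = 2 ^ (n - 1)
    · have h0 : (2:ℚ) ^ (n - 1) - (T:ℚ) = 0 := by
        rw [hTeq]; push_cast; ring
      simp only [h0, zero_div, Int.ceil_zero, Finset.sum_const, smul_zero]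
      have h1 : binaryDigitSum T = 1 := by rw [hTeq]; exact dsum_two_pow _
      rw [← hcZ, h1]
      omega
    · have hTlt : T < 2 ^ (n - 1) := lt_of_le_of_ne hTle hTeq
      set M := 2 ^ (n - 1) - T with hM
      have hMpos : 0 < M := by omega
      have hcast : (2:ℚ) ^ (n - 1) - (T:ℚ) = (M:ℚ) := by
        have h := Nat.cast_sub (R := ℚ) hTle
        rw [hM, h]
        push_cast
        ring
      simp only [hcast]
      rw [Finset.sum_congr rfl (fun i _ => ceil_term M i hMpos), ← Nat.cast_sum]
      rw [show (∑ i ∈ Finset.range n, ((M - 1) / 2 ^ i + 1))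
          = (∑ i ∈ Finset.range n, (M - 1) / 2 ^ i) + n by
        rw [Finset.sum_add_distrib, Finset.sum_const, Finset.card_range, smul_eq_mul, mul_one]]
      rw [sum_div_pow n (M - 1) (by omega)]
      have hcompl : binaryDigitSum (M - 1) = (n - 1) - binaryDigitSum T := by
        rw [show M - 1 = 2 ^ (n - 1) - 1 - T by omega]
        exact dsum_compl (n-1) T hTlt
      have hTd : binaryDigitSum T ≤ n - 1 := dsum_lt_pow (n-1) T hTlt
      have hle2 : binaryDigitSum (M - 1) ≤ M - 1 := dsum_le _
      rw [← hcZ]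
      omega
end
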